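/- Let p be a prime with p ≡ 3 (mod 4), let m be a positive integer, and set n = p^m. Then every non-degenerate ℤ-bilinear form b : ℤ/nℤ × ℤ/nℤ → ℤ/nℤ is equivalent to a standard form up to sign: there exists an additive automorphism ψ of ℤ/nℤ such that either b(ψ(x),ψ(y)) = x·y for all x, y, or b(ψ(x),ψ(y)) = −x·y for all x, y. -/

import Mathlib

section aux

variable {p m : ℕ}

/-- In `ZMod (p^m)` for `p` an odd prime, `a * a = 1` implies `a = ±1`. -/
lemma zmod_sq_eq_one (hp : p.Prime) (hodd : p ≠ 2) (hm : 0 < m)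
    (a : ZMod (p ^ m)) (ha : a * a = 1) : a = 1 ∨ a = -1 := by
  haveI : NeZero (p ^ m) := ⟨pow_ne_zero _ hp.ne_zero⟩
  set k : ℤ := (a.val : ℤ) with hk
  have hak : ((k : ℤ) : ZMod (p ^ m)) = a := by
    simp [hk, ZMod.natCast_val, ZMod.intCast_cast]
  have hdvd0 : ((p : ℤ)) ^ m ∣ k * k - 1 := by
    have h0 : ((k * k - 1 : ℤ) : ZMod (p ^ m)) = 0 := by
      push_cast
      rw [hak]
      linear_combination ha
    rw [ZMod.intCast_zmod_eq_zero_iff_dvd] at h0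
    exact_mod_cast h0
  have hdvd : ((p : ℤ)) ^ m ∣ (k - 1) * (k + 1) := by
    have e : (k - 1) * (k + 1) = k * k - 1 := by ring
    rw [e]; exact hdvd0
  have hpZ : Prime (p : ℤ) := Nat.prime_iff_prime_int.mp hp
  have hp3 : 3 ≤ p := by have := hp.two_le; omega
  have hnot : ¬ ((p : ℤ) ∣ (k - 1) ∧ (p : ℤ) ∣ (k + 1)) := by
    rintro ⟨h1, h2⟩
    have h3 : (p : ℤ) ∣ 2 := by
      have := dvd_sub h2 h1
      simpa using this
    have h4 := Int.le_of_dvd (by norm_num) h3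
    omega
  rcases Classical.em ((p : ℤ) ∣ (k + 1)) with h2 | h2
  · have h1 : ¬ (p : ℤ) ∣ (k - 1) := fun h => hnot ⟨h, h2⟩
    have hcop : IsCoprime ((p : ℤ) ^ m) (k - 1) :=
      IsCoprime.pow_left ((hpZ.coprime_iff_not_dvd).mpr h1)
    have hdd : ((p : ℤ) ^ m) ∣ (k + 1) := hcop.dvd_of_dvd_mul_left hdvd
    right
    have h0 : ((k + 1 : ℤ) : ZMod (p ^ m)) = 0 := by
      rw [ZMod.intCast_zmod_eq_zero_iff_dvd]; push_cast; exact hdd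
    push_cast at h0
    rw [hak] at h0
    linear_combination h0
  · have hcop : IsCoprime ((p : ℤ) ^ m) (k + 1) :=
      IsCoprime.pow_left ((hpZ.coprime_iff_not_dvd).mpr h2)
    have hdd : ((p : ℤ) ^ m) ∣ (k - 1) := hcop.dvd_of_dvd_mul_right hdvd
    left
    have h0 : ((k - 1 : ℤ) : ZMod (p ^ m)) = 0 := by
      rw [ZMod.intCast_zmod_eq_zero_iff_dvd]; push_cast; exact hdd
    push_cast at h0
    rw [hak] at h0
    linear_combination h0

/-- `-1` is not a square in `ZMod (p^m)` when `p ≡ 3 (mod 4)`. -/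
lemma zmod_neg_one_not_square (hp : p.Prime) (hp4 : p % 4 = 3) (hm : 0 < m) :
    ¬ IsSquare (-1 : ZMod (p ^ m)) := by
  haveI : Fact p.Prime := ⟨hp⟩
  rintro ⟨r, hr⟩
  have hdvd : p ∣ p ^ m := dvd_pow_self p hm.ne'
  have hsq : IsSquare (-1 : ZMod p) :=
    ⟨ZMod.castHom hdvd (ZMod p) r, by rw [← map_mul, ← hr, map_neg, map_one]⟩
  exact (ZMod.exists_sq_eq_neg_one_iff.mp hsq) hp4

/-- For a unit `c` of `ZMod (p^m)`, `p ≡ 3 (mod 4)`, either `c` or `-c` is a square. -/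
lemma zmod_unit_square_or_neg_square (hp : p.Prime) (hp4 : p % 4 = 3) (hm : 0 < m)
    (c : ZMod (p ^ m)) (hc : IsUnit c) : IsSquare c ∨ IsSquare (-c) := by
  haveI : NeZero (p ^ m) := ⟨pow_ne_zero _ hp.ne_zero⟩
  have hodd : p ≠ 2 := by omega
  obtain ⟨cu, rfl⟩ := hc
  let sq : (ZMod (p ^ m))ˣ →* (ZMod (p ^ m))ˣ := powMonoidHom 2
  have val2 : ∀ u w : (ZMod (p ^ m))ˣ, w ^ 2 = u →
      (u : ZMod (p ^ m)) = (w : ZMod (p ^ m)) * w := by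
    intro u w h
    rw [← h, pow_two, Units.val_mul]
  have hneg1 : (1 : (ZMod (p ^ m))ˣ) ≠ -1 := by
    intro h
    have h' : (1 : ZMod (p ^ m)) = -1 := by
      have := congrArg (Units.val) h
      simpa using this
    have h2 : ((2 : ℕ) : ZMod (p ^ m)) = 0 := by push_cast; linear_combination h'
    rw [ZMod.natCast_eq_zero_iff] at h2
    have h5 : p ^ m ≤ 2 := Nat.le_of_dvd (by norm_num) h2
    have h6 : 3 ≤ p := by have := hp.two_le; omega
    have h7 : p ≤ p ^ m := Nat.le_self_pow hm.ne' p
    omega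
  have hker : (sq.ker : Set (ZMod (p ^ m))ˣ) = {1, -1} := by
    ext u
    simp only [Set.mem_insert_iff, Set.mem_singleton_iff, SetLike.mem_coe, MonoidHom.mem_ker]
    constructor
    · intro hu
      have hu' : (u : ZMod (p ^ m)) * u = 1 := (val2 1 u hu).symm
      rcases zmod_sq_eq_one hp hodd hm _ hu' with h | h
      · left; exact Units.ext (by simpa using h)
      · right; exact Units.ext (by simpa using h)
    · rintro (rfl | rfl) <;> simp [sq]
  have hcard_ker : Nat.card sq.ker = 2 := by
    rw [← SetLike.coe_sort_coe, hker]
    rw [Nat.card_coe_set_eq, Set.ncard_pair hneg1]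
  set H := sq.range with hH
  have hmemsq : ∀ u : (ZMod (p ^ m))ˣ, u ∈ H → IsSquare (u : ZMod (p ^ m)) := by
    rintro u ⟨v, hv⟩
    exact ⟨v, val2 u v hv⟩
  have hsqmem : ∀ u : (ZMod (p ^ m))ˣ, u ^ 2 ∈ H := fun u => ⟨u, rfl⟩
  have hneg_notin : (-1 : (ZMod (p ^ m))ˣ) ∉ H := by
    intro h
    apply zmod_neg_one_not_square hp hp4 hm
    have := hmemsq _ h
    simpa using this
  have hcardrange : Nat.card H = sq.ker.index := by
    rw [Subgroup.index_eq_card]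
    exact Nat.card_congr (QuotientGroup.quotientKerEquivRange sq).symm.toEquiv
  have h1 : Nat.card sq.ker * sq.ker.index = Nat.card (ZMod (p ^ m))ˣ :=
    Subgroup.card_mul_index _
  have h2 : Nat.card H * H.index = Nat.card (ZMod (p ^ m))ˣ := Subgroup.card_mul_index _
  have hpos : 0 < Nat.card H := Nat.card_pos
  have hindex : H.index = 2 := by
    rw [hcard_ker] at h1
    rw [hcardrange] at h2 hpos
    have heq : sq.ker.index * H.index = sq.ker.index * 2 := by rw [h2, ← h1]; ring
    exact Nat.eq_of_mul_eq_mul_left hpos heq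
  by_contra hcon
  push_neg at hcon
  obtain ⟨hc1, hc2⟩ := hcon
  have hcu_notin : cu ∉ H := fun h => hc1 (hmemsq _ h)
  have hQcard : Nat.card ((ZMod (p ^ m))ˣ ⧸ H) = 2 := by
    rw [← Subgroup.index_eq_card, hindex]
  have key : (QuotientGroup.mk cu : (ZMod (p ^ m))ˣ ⧸ H) = QuotientGroup.mk (-1) := by
    have ha : (QuotientGroup.mk cu : (ZMod (p ^ m))ˣ ⧸ H) ≠ 1 := by
      rw [Ne, QuotientGroup.eq_one_iff]; exact hcu_notin
    have hb : (QuotientGroup.mk (-1 : (ZMod (p ^ m))ˣ) : (ZMod (p ^ m))ˣ ⧸ H) ≠ 1 := by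
      rw [Ne, QuotientGroup.eq_one_iff]; exact hneg_notin
    by_contra hab
    haveI : Finite ((ZMod (p ^ m))ˣ ⧸ H) := Nat.finite_of_card_ne_zero (by omega)
    haveI : Fintype ((ZMod (p ^ m))ˣ ⧸ H) := Fintype.ofFinite _
    have h3 : ({1, QuotientGroup.mk cu, QuotientGroup.mk (-1 : (ZMod (p ^ m))ˣ)} :
        Finset ((ZMod (p ^ m))ˣ ⧸ H)).card = 3 := by
      rw [Finset.card_insert_of_notMem (by simp [Ne.symm ha, Ne.symm hb]),
        Finset.card_insert_of_notMem (by simpa using hab), Finset.card_singleton]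
    have hle := Finset.card_le_univ ({1, QuotientGroup.mk cu,
      QuotientGroup.mk (-1 : (ZMod (p ^ m))ˣ)} : Finset ((ZMod (p ^ m))ˣ ⧸ H))
    rw [h3] at hle
    rw [Nat.card_eq_fintype_card] at hQcard
    omega
  rw [QuotientGroup.eq] at key
  have hfin : (-cu : (ZMod (p ^ m))ˣ) ∈ H := by
    have hmul := H.mul_mem (hsqmem cu) key
    have he : cu ^ 2 * (cu⁻¹ * -1) = -cu := by
      have h9 : cu ^ 2 * (cu⁻¹ * -1) = cu * -1 := by group
      rw [h9, mul_neg_one]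
    rwa [he] at hmul
  have := hmemsq _ hfin
  apply hc2
  simpa using this

end aux

/-- For a prime `p ≡ 3 (mod 4)` and `n = p^m` with `m ≥ 1`, every non-degenerate
`ℤ`-bilinear form on `ℤ/nℤ` is equivalent, up to sign, to the standard form. -/
theorem bilinear_form_equiv_standard_up_to_sign (p : ℕ) (hp : p.Prime) (hp4 : p % 4 = 3)
    (m : ℕ) (hm : 0 < m)
    (b : ZMod (p ^ m) →ₗ[ℤ] ZMod (p ^ m) →ₗ[ℤ] ZMod (p ^ m))
    (hb : ∀ x : ZMod (p ^ m), (∀ y : ZMod (p ^ m), b x y = 0) → x = 0) :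
    ∃ ψ : ZMod (p ^ m) ≃+ ZMod (p ^ m),
      (∀ x y : ZMod (p ^ m), b (ψ x) (ψ y) = x * y) ∨
        (∀ x y : ZMod (p ^ m), b (ψ x) (ψ y) = -(x * y)) := by
  haveI : NeZero (p ^ m) := ⟨pow_ne_zero _ hp.ne_zero⟩
  set c : ZMod (p ^ m) := b 1 1 with hc
  -- the form is multiplication by c
  have hbxy : ∀ x y : ZMod (p ^ m), b x y = x * y * c := by
    intro x y
    have hx1 : ((x.val : ℤ) : ZMod (p ^ m)) = x := by
      simp [ZMod.natCast_val, ZMod.intCast_cast]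
    have hy1 : ((y.val : ℤ) : ZMod (p ^ m)) = y := by
      simp [ZMod.natCast_val, ZMod.intCast_cast]
    have hx : x = ((x.val : ℤ)) • (1 : ZMod (p ^ m)) := by
      rw [zsmul_eq_mul, hx1, mul_one]
    have hy : y = ((y.val : ℤ)) • (1 : ZMod (p ^ m)) := by
      rw [zsmul_eq_mul, hy1, mul_one]
    calc b x y = b (((x.val : ℤ)) • 1) (((y.val : ℤ)) • 1) := by rw [← hx, ← hy]
      _ = (x.val : ℤ) • ((y.val : ℤ) • c) := by
          rw [LinearMap.map_smul₂, map_smul]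
      _ = x * y * c := by
          rw [zsmul_eq_mul, zsmul_eq_mul, hx1, hy1]
          ring
  -- c is a unit
  have hcu : IsUnit c := by
    have hinj : Function.Injective (fun x : ZMod (p ^ m) => x * c) := by
      intro x y hxy
      simp only at hxy
      have : x - y = 0 := by
        apply hb
        intro z
        rw [hbxy]
        have : (x - y) * c = 0 := by linear_combination hxy
        linear_combination z * this
      linear_combination this
    have hsurj : Function.Surjective (fun x : ZMod (p ^ m) => x * c) :=
      Finite.surjective_of_injective hinj
    obtain ⟨d, hd⟩ := hsurj 1
    exact IsUnit.of_mul_eq_one (a := c) d (by linear_combination hd)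
  rcases zmod_unit_square_or_neg_square hp hp4 hm c hcu with hsq | hsq
  · obtain ⟨u, hu⟩ := hsq
    have huu : IsUnit u := isUnit_of_mul_isUnit_left (by rw [← hu]; exact hcu)
    obtain ⟨uu, rfl⟩ := huu
    refine ⟨AddAut.mulLeft uu⁻¹, Or.inl fun x y => ?_⟩
    have hinv : ((uu⁻¹ : (ZMod (p ^ m))ˣ) : ZMod (p ^ m)) * uu = 1 := by
      rw [← Units.val_mul, inv_mul_cancel, Units.val_one]
    rw [hbxy]
    simp only [AddAut.mulLeft_apply_apply, Units.smul_def, smul_eq_mul]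
    calc ((uu⁻¹ : (ZMod (p ^ m))ˣ) : ZMod (p ^ m)) * x *
          (((uu⁻¹ : (ZMod (p ^ m))ˣ) : ZMod (p ^ m)) * y) * c
        = (((uu⁻¹ : (ZMod (p ^ m))ˣ) : ZMod (p ^ m)) * uu) *
          ((((uu⁻¹ : (ZMod (p ^ m))ˣ) : ZMod (p ^ m)) * uu)) * (x * y) := by
          rw [hu]; ring
      _ = x * y := by rw [hinv]; ring
  · obtain ⟨u, hu⟩ := hsq
    have huu : IsUnit u := isUnit_of_mul_isUnit_left (by rw [← hu]; exact hcu.neg)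
    obtain ⟨uu, rfl⟩ := huu
    refine ⟨AddAut.mulLeft uu⁻¹, Or.inr fun x y => ?_⟩
    have hinv : ((uu⁻¹ : (ZMod (p ^ m))ˣ) : ZMod (p ^ m)) * uu = 1 := by
      rw [← Units.val_mul, inv_mul_cancel, Units.val_one]
    rw [hbxy]
    simp only [AddAut.mulLeft_apply_apply, Units.smul_def, smul_eq_mul]
    have hu' : c = -((uu : ZMod (p ^ m)) * uu) := by linear_combination -hu
    calc ((uu⁻¹ : (ZMod (p ^ m))ˣ) : ZMod (p ^ m)) * x *
          (((uu⁻¹ : (ZMod (p ^ m))ˣ) : ZMod (p ^ m)) * y) * c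
        = -((((uu⁻¹ : (ZMod (p ^ m))ˣ) : ZMod (p ^ m)) * uu) *
          ((((uu⁻¹ : (ZMod (p ^ m))ˣ) : ZMod (p ^ m)) * uu)) * (x * y)) := by
          rw [hu']; ring
      _ = -(x * y) := by rw [hinv]; ring
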